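/- Fix r ∈ ℝ₊^m and a compact base B of K*. Then F_r(Ā, b̄) ≠ ∅ if and only if (0_n, 1) does not belong to the closure of cone(⋃_{λ ∈ B} { Σ_{i=1}^m λ_i ((ā_i, b̄_i) + r_i·B_{n+1}) }). -/

import Mathlib

open Finset Pointwise

noncomputable def enorm₂ {k : ℕ} (v : Fin k → ℝ) : ℝ := Real.sqrt (∑ i, v i ^ 2)

def coneHull {k : ℕ} (X : Set (Fin k → ℝ)) : Set (Fin k → ℝ) :=
  {y | y = 0 ∨ ∃ t : ℝ, 0 ≤ t ∧ ∃ c ∈ convexHull ℝ X, y = t • c}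

def dualCone {m : ℕ} (K : Set (Fin m → ℝ)) : Set (Fin m → ℝ) :=
  {a | ∀ x ∈ K, 0 ≤ ∑ i, a i * x i}

def Feas {m n : ℕ} (K : Set (Fin m → ℝ)) (Abar : Fin m → Fin n → ℝ) (bbar : Fin m → ℝ)
    (r : Fin m → ℝ) : Set (Fin n → ℝ) :=
  {x | ∀ (a : Fin m → Fin n → ℝ) (b : Fin m → ℝ),
      (∀ i, enorm₂ (Fin.snoc (a i - Abar i) (b i - bbar i)) ≤ r i) →
      (fun i => (∑ j, a i j * x j) + b i) ∈ -K}

def Adm {m n : ℕ} (K : Set (Fin m → ℝ)) (Abar : Fin m → Fin n → ℝ) (bbar : Fin m → ℝ) :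
    Set (Fin m → ℝ) :=
  {r | (∀ i, 0 ≤ r i) ∧ (Feas K Abar bbar r).Nonempty}

noncomputable def rrf {m n : ℕ} (K : Set (Fin m → ℝ)) (Abar : Fin m → Fin n → ℝ)
    (bbar : Fin m → ℝ) : ℝ :=
  sSup {α : ℝ | 0 ≤ α ∧ (fun _ => α) ∈ Adm K Abar bbar}

def Epi {m n : ℕ} (Abar : Fin m → Fin n → ℝ) (bbar : Fin m → ℝ) (B : Set (Fin m → ℝ)) :
    Set (Fin (n + 1) → ℝ) :=
  {y | ∃ l ∈ B, ∃ w : ℝ, 0 ≤ w ∧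
    y = Fin.snoc (fun j => ∑ i, l i * Abar i j) (-(∑ i, l i * bbar i) + w)}

noncomputable def edist0 {m n : ℕ} (Abar : Fin m → Fin n → ℝ) (bbar : Fin m → ℝ)
    (B : Set (Fin m → ℝ)) : ℝ :=
  sInf {t : ℝ | ∃ y ∈ Epi Abar bbar B, t = enorm₂ y}

def IsCompactBase {m : ℕ} (C B : Set (Fin m → ℝ)) : Prop :=
  IsCompact B ∧ Convex ℝ B ∧ B ⊆ C ∧ (0 : Fin m → ℝ) ∉ B ∧
    C = {y | ∃ t : ℝ, 0 ≤ t ∧ ∃ b ∈ B, y = t • b}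

def IsClosedConvexCone {m : ℕ} (K : Set (Fin m → ℝ)) : Prop :=
  IsClosed K ∧ Convex ℝ K ∧ ∀ t : ℝ, 0 ≤ t → ∀ x ∈ K, t • x ∈ K

noncomputable def c1 {m : ℕ} (n : ℕ) (B : Set (Fin m → ℝ)) : ℝ :=
  (sSup {t : ℝ | ∃ l ∈ B, ∃ u : Fin m → (Fin (n + 1) → ℝ),
    (∀ i, enorm₂ (u i) ≤ 1) ∧ t = enorm₂ (∑ i, l i • u i)})⁻¹

noncomputable def c2 {m : ℕ} (B : Set (Fin m → ℝ)) : ℝ :=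
  (sInf {t : ℝ | ∃ l ∈ B, t = ∑ i, |l i|})⁻¹
lemma clm_repr {k : ℕ} (f : (Fin k → ℝ) →L[ℝ] ℝ) (y : Fin k → ℝ) :
    f y = ∑ i, y i * f (Pi.single i 1) := by
  have hy : y = ∑ i, y i • (Pi.single i 1 : Fin k → ℝ) := by
    funext j
    simp [Finset.sum_apply, Pi.single_apply]
  conv_lhs => rw [hy]
  rw [map_sum]
  exact Finset.sum_congr rfl fun i _ => by simp

lemma coneHull_zero {k : ℕ} (X : Set (Fin k → ℝ)) : (0 : Fin k → ℝ) ∈ coneHull X :=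
  Or.inl rfl

lemma coneHull_smul {k : ℕ} {X : Set (Fin k → ℝ)} {t : ℝ} (ht : 0 ≤ t) {y : Fin k → ℝ}
    (hy : y ∈ coneHull X) : t • y ∈ coneHull X := by
  rcases hy with rfl | ⟨s, hs, c, hc, rfl⟩
  · exact Or.inl (smul_zero t)
  · exact Or.inr ⟨t * s, mul_nonneg ht hs, c, hc, (smul_smul t s c)⟩

lemma subset_coneHull {k : ℕ} (X : Set (Fin k → ℝ)) : X ⊆ coneHull X := fun y hy =>
  Or.inr ⟨1, zero_le_one, y, subset_convexHull ℝ X hy, (one_smul ℝ y).symm⟩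

lemma coneHull_convex {k : ℕ} (X : Set (Fin k → ℝ)) : Convex ℝ (coneHull X) := by
  intro y hy z hz a b ha hb hab
  rcases hy with rfl | ⟨s, hs, c, hc, rfl⟩
  · simpa using coneHull_smul hb hz
  rcases hz with rfl | ⟨u, hu, d, hd, rfl⟩
  · simpa using coneHull_smul ha (Or.inr ⟨s, hs, c, hc, rfl⟩)
  set T := a * s + b * u with hT
  rcases eq_or_lt_of_le (show (0:ℝ) ≤ T from by positivity) with hT0 | hTpos
  · have h1 : a * s = 0 := by nlinarith [mul_nonneg ha hs, mul_nonneg hb hu]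
    have h2 : b * u = 0 := by nlinarith [mul_nonneg ha hs, mul_nonneg hb hu]
    refine Or.inl ?_
    rw [smul_smul, smul_smul, h1, h2, zero_smul, zero_smul, add_zero]
  · refine Or.inr ⟨T, le_of_lt hTpos, (a * s / T) • c + (b * u / T) • d, ?_, ?_⟩
    · refine (convex_convexHull ℝ X) hc hd (by positivity) (by positivity) ?_
      field_simp
      exact hT.symm
    · have e1 : T • ((a * s / T) • c) = (a * s) • c := by
        rw [smul_smul]; congr 1; field_simp
      have e2 : T • ((b * u / T) • d) = (b * u) • d := by
        rw [smul_smul]; congr 1; field_simp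
      rw [smul_add, e1, e2, smul_smul, smul_smul]

lemma dot_nonpos_closure {k : ℕ} {X : Set (Fin k → ℝ)} (c : Fin k → ℝ)
    (h : ∀ y ∈ X, ∑ j, y j * c j ≤ 0) :
    ∀ y ∈ closure (coneHull X), ∑ j, y j * c j ≤ 0 := by
  have hcont : Continuous (fun y : Fin k → ℝ => ∑ j, y j * c j) :=
    continuous_finset_sum _ fun j _ => (continuous_apply j).mul continuous_const
  have hCset : Convex ℝ {y : Fin k → ℝ | ∑ j, y j * c j ≤ 0} := by
    intro p hp q hq a b ha hb hab
    simp only [Set.mem_setOf_eq] at hp hq ⊢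
    have : ∑ j, (a • p + b • q) j * c j = a * ∑ j, p j * c j + b * ∑ j, q j * c j := by
      simp only [Pi.add_apply, Pi.smul_apply, smul_eq_mul, add_mul, Finset.sum_add_distrib,
        Finset.mul_sum, mul_assoc]
    rw [this]
    nlinarith
  have hcone : ∀ y ∈ coneHull X, ∑ j, y j * c j ≤ 0 := by
    rintro y (rfl | ⟨t, ht, d, hd, rfl⟩)
    · simp
    · have hd' : ∑ j, d j * c j ≤ 0 := convexHull_min h hCset hd
      have : ∑ j, (t • d) j * c j = t * ∑ j, d j * c j := by
        simp [Finset.mul_sum, mul_assoc]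
      rw [this]
      nlinarith
  intro y hy
  exact closure_minimal hcone (isClosed_le hcont continuous_const) hy

lemma sep_lemma {k : ℕ} {C : Set (Fin k → ℝ)} (hconv : Convex ℝ C) (hcl : IsClosed C)
    (h0 : (0 : Fin k → ℝ) ∈ C) (hsmul : ∀ t : ℝ, 0 ≤ t → ∀ y ∈ C, t • y ∈ C)
    {z : Fin k → ℝ} (hz : z ∉ C) :
    ∃ w : Fin k → ℝ, (∀ y ∈ C, ∑ j, y j * w j ≤ 0) ∧ 0 < ∑ j, z j * w j := by
  obtain ⟨f, u, hfC, hfz⟩ := geometric_hahn_banach_closed_point hconv hcl hz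
  have hu : 0 < u := by simpa using hfC 0 h0
  have hle : ∀ y ∈ C, f y ≤ 0 := by
    intro y hy
    by_contra hpos
    push_neg at hpos
    have ht : (0:ℝ) ≤ (u + 1) / f y := by positivity
    have h2 := hfC (((u + 1) / f y) • y) (hsmul _ ht y hy)
    rw [map_smul, smul_eq_mul, div_mul_cancel₀ _ (ne_of_gt hpos)] at h2
    linarith
  refine ⟨fun j => f (Pi.single j 1), ?_, ?_⟩
  · intro y hy
    rw [← clm_repr]
    exact hle y hy
  · rw [← clm_repr]
    linarith

lemma bipolar_mem {m : ℕ} {K : Set (Fin m → ℝ)} (hclosed : IsClosed K) (hconv : Convex ℝ K)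
    (hcone : ∀ t : ℝ, 0 ≤ t → ∀ x ∈ K, t • x ∈ K) (h0 : (0 : Fin m → ℝ) ∈ K)
    {z : Fin m → ℝ} (hz : ∀ μ ∈ dualCone K, 0 ≤ ∑ i, μ i * z i) : z ∈ K := by
  by_contra hzK
  obtain ⟨w, hw1, hw2⟩ := sep_lemma hconv hclosed h0 hcone hzK
  have hmem : (fun i => -w i) ∈ dualCone K := by
    intro x hx
    have h1 := hw1 x hx
    have : ∑ i, (fun i => -w i) i * x i = -(∑ i, x i * w i) := by
      rw [← Finset.sum_neg_distrib]
      exact Finset.sum_congr rfl fun i _ => by ring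
    rw [this]
    linarith
  have h2 := hz _ hmem
  have : ∑ i, (fun i => -w i) i * z i = -(∑ i, z i * w i) := by
    rw [← Finset.sum_neg_distrib]
    exact Finset.sum_congr rfl fun i _ => by ring
  rw [this] at h2
  linarith

lemma snoc_sub {n : ℕ} (a a' : Fin n → ℝ) (b b' : ℝ) :
    (Fin.snoc (a - a') (b - b') : Fin (n+1) → ℝ) = Fin.snoc a b - Fin.snoc a' b' := by
  funext j
  refine Fin.lastCases ?_ ?_ j
  · simp
  · intro i; simp

lemma dot_snoc_sum {m n : ℕ} (l : Fin m → ℝ) (v : Fin m → Fin (n + 1) → ℝ) (x : Fin n → ℝ) :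
    ∑ j, (∑ i, l i • v i) j * (Fin.snoc x 1 : Fin (n+1) → ℝ) j
      = ∑ i, l i * ((∑ j, v i (Fin.castSucc j) * x j) + v i (Fin.last n)) := by
  have step1 : ∀ j, (∑ i, l i • v i) j = ∑ i, l i * v i j := by
    intro j; simp [Finset.sum_apply]
  calc ∑ j, (∑ i, l i • v i) j * (Fin.snoc x 1 : Fin (n+1) → ℝ) j
      = ∑ j, ∑ i, l i * (v i j * (Fin.snoc x 1 : Fin (n+1) → ℝ) j) := by
        refine Finset.sum_congr rfl fun j _ => ?_
        rw [step1, Finset.sum_mul]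
        exact Finset.sum_congr rfl fun i _ => by ring
    _ = ∑ i, ∑ j, l i * (v i j * (Fin.snoc x 1 : Fin (n+1) → ℝ) j) := Finset.sum_comm
    _ = ∑ i, l i * ((∑ j, v i (Fin.castSucc j) * x j) + v i (Fin.last n)) := by
        refine Finset.sum_congr rfl fun i _ => ?_
        have hsum : (∑ j, v i j * (Fin.snoc x 1 : Fin (n+1) → ℝ) j)
            = (∑ j, v i (Fin.castSucc j) * x j) + v i (Fin.last n) := by
          rw [Fin.sum_univ_castSucc]
          simp
        rw [← Finset.mul_sum, hsum]


/-- dual characterization of nonemptiness of the robust feasible set. -/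
theorem statement9 {m n : ℕ} (K : Set (Fin m → ℝ)) (hclosed : IsClosed K) (hconv : Convex ℝ K)
    (hcone : ∀ t : ℝ, 0 ≤ t → ∀ x ∈ K, t • x ∈ K)
    (hpointed : K ∩ (-K) = {0}) (hint : (interior K).Nonempty)
    (B : Set (Fin m → ℝ)) (hB : IsCompactBase (dualCone K) B)
    (Abar : Fin m → Fin n → ℝ) (bbar : Fin m → ℝ) (r : Fin m → ℝ) (hr : ∀ i, 0 ≤ r i) :
    (Feas K Abar bbar r).Nonempty ↔
      (Pi.single (Fin.last n) 1 : Fin (n + 1) → ℝ) ∉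
        closure (coneHull {y : Fin (n + 1) → ℝ | ∃ l ∈ B, ∃ v : Fin m → (Fin (n + 1) → ℝ),
          (∀ i, enorm₂ (v i - Fin.snoc (Abar i) (bbar i)) ≤ r i) ∧ y = ∑ i, l i • v i}) := by
  obtain ⟨hBcomp, hBconv, hBsub, hB0, hBeq⟩ := hB
  have h0K : (0 : Fin m → ℝ) ∈ K := by
    obtain ⟨p, hp⟩ := hint
    have := hcone 0 le_rfl p (interior_subset hp)
    simpa using this
  set S : Set (Fin (n + 1) → ℝ) := {y : Fin (n + 1) → ℝ | ∃ l ∈ B, ∃ v : Fin m → (Fin (n + 1) → ℝ),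
          (∀ i, enorm₂ (v i - Fin.snoc (Abar i) (bbar i)) ≤ r i) ∧ y = ∑ i, l i • v i} with hS
  have key : ∀ x : Fin n → ℝ, x ∈ Feas K Abar bbar r ↔
      ∀ y ∈ S, ∑ j, y j * (Fin.snoc x 1 : Fin (n + 1) → ℝ) j ≤ 0 := by
    intro x
    constructor
    · intro hx y hy
      obtain ⟨l, hl, v, hv, rfl⟩ := hy
      set a : Fin m → Fin n → ℝ := fun i j => v i (Fin.castSucc j) with ha
      set b : Fin m → ℝ := fun i => v i (Fin.last n) with hb
      have hvi : ∀ i, (Fin.snoc (a i) (b i) : Fin (n + 1) → ℝ) = v i := by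
        intro i
        funext j
        refine Fin.lastCases ?_ (fun j0 => ?_) j
        · simp [hb]
        · simp [ha]
      have hab : ∀ i, enorm₂ (Fin.snoc (a i - Abar i) (b i - bbar i)) ≤ r i := by
        intro i
        rw [snoc_sub, hvi]
        exact hv i
      have hz := hx a b hab
      rw [Set.mem_neg] at hz
      have hineq := hBsub hl _ hz
      rw [dot_snoc_sum]
      have heq : ∑ i, l i * ((∑ j, v i (Fin.castSucc j) * x j) + v i (Fin.last n))
          = -(∑ i, l i * (-(fun i => (∑ j, a i j * x j) + b i) : Fin m → ℝ) i) := by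
        rw [← Finset.sum_neg_distrib]
        exact Finset.sum_congr rfl fun i _ => by simp [ha, hb]; ring
      rw [heq]
      linarith
    · intro h a b hab
      rw [Set.mem_neg]
      apply bipolar_mem hclosed hconv hcone h0K
      intro μ hμ
      rw [hBeq] at hμ
      obtain ⟨t, ht, l, hl, rfl⟩ := hμ
      set v : Fin m → Fin (n + 1) → ℝ := fun i => Fin.snoc (a i) (b i) with hv
      have hnorm : ∀ i, enorm₂ (v i - Fin.snoc (Abar i) (bbar i)) ≤ r i := by
        intro i
        rw [hv, ← snoc_sub]
        exact hab i
      have hyS : (∑ i, l i • v i) ∈ S := ⟨l, hl, v, hnorm, rfl⟩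
      have hdot := h _ hyS
      rw [dot_snoc_sum] at hdot
      have hsimp : ∀ i, ((∑ j, v i (Fin.castSucc j) * x j) + v i (Fin.last n))
          = (∑ j, a i j * x j) + b i := by
        intro i; simp [hv]
      have hdot' : ∑ i, l i * ((∑ j, a i j * x j) + b i) ≤ 0 := by
        calc ∑ i, l i * ((∑ j, a i j * x j) + b i)
            = ∑ i, l i * ((∑ j, v i (Fin.castSucc j) * x j) + v i (Fin.last n)) :=
              Finset.sum_congr rfl fun i _ => by rw [hsimp i]
          _ ≤ 0 := hdot
      have hfinal : ∑ i, (t • l) i * (-(fun i => (∑ j, a i j * x j) + b i) : Fin m → ℝ) i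
          = t * -(∑ i, l i * ((∑ j, a i j * x j) + b i)) := by
        calc ∑ i, (t • l) i * (-(fun i => (∑ j, a i j * x j) + b i) : Fin m → ℝ) i
            = ∑ i, t * -(l i * ((∑ j, a i j * x j) + b i)) :=
              Finset.sum_congr rfl fun i _ => by simp; ring
          _ = t * ∑ i, -(l i * ((∑ j, a i j * x j) + b i)) := by rw [Finset.mul_sum]
          _ = t * -(∑ i, l i * ((∑ j, a i j * x j) + b i)) := by rw [Finset.sum_neg_distrib]
      rw [hfinal]
      nlinarith
  constructor
  · rintro ⟨x, hx⟩ hmem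
    have hdot := (key x).mp hx
    have hle := dot_nonpos_closure (Fin.snoc x 1 : Fin (n + 1) → ℝ) hdot _ hmem
    have hval : ∑ j, (Pi.single (Fin.last n) 1 : Fin (n + 1) → ℝ) j
        * (Fin.snoc x 1 : Fin (n + 1) → ℝ) j = 1 := by
      rw [Finset.sum_eq_single (Fin.last n)]
      · simp
      · intro j _ hj
        simp [Pi.single_apply, hj]
      · simp
    rw [hval] at hle
    linarith
  · intro hnot
    have hCconv := (coneHull_convex S).closure
    have h0C : (0 : Fin (n + 1) → ℝ) ∈ closure (coneHull S) := subset_closure (coneHull_zero S)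
    have hCsmul : ∀ t : ℝ, 0 ≤ t → ∀ y ∈ closure (coneHull S), t • y ∈ closure (coneHull S) := by
      intro t ht y hy
      exact map_mem_closure (continuous_const_smul t) hy (fun z hz => coneHull_smul ht hz)
    obtain ⟨w, hw1, hw2⟩ := sep_lemma hCconv isClosed_closure h0C hCsmul hnot
    have hval : ∑ j, (Pi.single (Fin.last n) 1 : Fin (n + 1) → ℝ) j * w j = w (Fin.last n) := by
      rw [Finset.sum_eq_single (Fin.last n)]
      · simp
      · intro j _ hj
        simp [Pi.single_apply, hj]
      · simp
    rw [hval] at hw2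
    set x : Fin n → ℝ := fun j => w (Fin.castSucc j) / w (Fin.last n) with hx
    refine ⟨x, (key x).mpr ?_⟩
    intro y hy
    have hyw := hw1 y (subset_closure (subset_coneHull S hy))
    have hsnoc : (Fin.snoc x 1 : Fin (n + 1) → ℝ) = fun j => w j / w (Fin.last n) := by
      funext j
      refine Fin.lastCases ?_ (fun j0 => ?_) j
      · simp [div_self (ne_of_gt hw2)]
      · simp [hx]
    rw [hsnoc]
    have hdiv : ∑ j, y j * (w j / w (Fin.last n)) = (∑ j, y j * w j) / w (Fin.last n) := by
      rw [Finset.sum_div]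
      exact Finset.sum_congr rfl fun j _ => by ring
    rw [hdiv, div_nonpos_iff]
    right
    exact ⟨hyw, hw2.le⟩
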